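/- Let Z and Z' be independent standard normal random variables and let a be a nonzero real number. Then P(|Z| < |Z' + a|) > 1/2. -/

import Mathlib

open MeasureTheory ProbabilityTheory
open scoped ENNReal NNReal

lemma nu_neg : (gaussianReal 0 1).map (fun x : ℝ => -x) = gaussianReal 0 1 := by
  have h := gaussianReal_map_const_mul (μ := 0) (v := 1) (-1)
  simp only [neg_one_mul, mul_zero] at h
  convert h using 2
  ext : 1
  norm_num

lemma nu_singleton (c : ℝ) : gaussianReal 0 1 {c} = 0 :=
  gaussianReal_absolutelyContinuous 0 one_ne_zero (measure_singleton c)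


lemma abs_pair (y a : ℝ) :
    (|y + a| = |y| + |a| ∧ |y - a| = |(|y| - |a|)|) ∨
    (|y - a| = |y| + |a| ∧ |y + a| = |(|y| - |a|)|) := by
  rcases le_total 0 y with hy | hy <;> rcases le_total 0 a with h | h
  · left
    constructor
    · rw [abs_of_nonneg hy, abs_of_nonneg h, abs_of_nonneg (by linarith : (0:ℝ) ≤ y + a)]
    · rw [abs_of_nonneg hy, abs_of_nonneg h]
  · right
    constructor
    · rw [abs_of_nonneg hy, abs_of_nonpos h, abs_of_nonneg (by linarith : (0:ℝ) ≤ y - a)]; ring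
    · rw [abs_of_nonneg hy, abs_of_nonpos h, sub_neg_eq_add]
  · right
    constructor
    · rw [abs_of_nonpos hy, abs_of_nonneg h, abs_of_nonpos (by linarith : y - a ≤ 0)]; ring
    · rw [abs_of_nonpos hy, abs_of_nonneg h, show -y - a = -(y + a) by ring, abs_neg]
  · left
    constructor
    · rw [abs_of_nonpos hy, abs_of_nonpos h, abs_of_nonpos (by linarith : y + a ≤ 0)]; ring
    · rw [abs_of_nonpos hy, abs_of_nonpos h, show -y - -a = -(y - a) by ring, abs_neg]

set_option maxHeartbeats 4000000 in
lemma count_key0 {u v b : ℝ} (hu : 0 ≤ u) (hv : 0 ≤ v) (hb : 0 < b) :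
    ((if v + b < u then 1 else 0) + (if |v - b| < u then 1 else 0)
      + (if u + b < v then 1 else 0) + (if |u - b| < v then 1 else 0) : ℕ)
    ≤ (if u < v + b then 1 else 0) + (if u < |v - b| then 1 else 0)
      + (if v < u + b then 1 else 0) + (if v < |u - b| then 1 else 0) := by
  rcases le_total b v with h1 | h1 <;> rcases le_total b u with h2 | h2
  · rw [abs_of_nonneg (by linarith : (0:ℝ) ≤ v - b), abs_of_nonneg (by linarith : (0:ℝ) ≤ u - b)]
    split_ifs <;> first | omega | (exfalso; linarith)
  · rw [abs_of_nonneg (by linarith : (0:ℝ) ≤ v - b), abs_of_nonpos (by linarith : u - b ≤ 0)]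
    split_ifs <;> first | omega | (exfalso; linarith)
  · rw [abs_of_nonpos (by linarith : v - b ≤ 0), abs_of_nonneg (by linarith : (0:ℝ) ≤ u - b)]
    split_ifs <;> first | omega | (exfalso; linarith)
  · rw [abs_of_nonpos (by linarith : v - b ≤ 0), abs_of_nonpos (by linarith : u - b ≤ 0)]
    split_ifs <;> first | omega | (exfalso; linarith)

lemma count_key {u v b : ℝ} (hu : 0 ≤ u) (hv : 0 ≤ v) (hb : 0 < b) :
    ((if v + b < u then 1 else 0) + (if |v - b| < u then 1 else 0)
      + (if u + b < v then 1 else 0) + (if |u - b| < v then 1 else 0)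
      + 4 * (if u < b / 2 ∧ v < b / 2 then 1 else 0) : ℕ)
    ≤ (if u < v + b then 1 else 0) + (if u < |v - b|then 1 else 0)
      + (if v < u + b then 1 else 0) + (if v < |u - b| then 1 else 0) := by
  by_cases hP : u < b / 2 ∧ v < b / 2
  · obtain ⟨hP1, hP2⟩ := hP
    have e1 : |v - b| = b - v := by rw [abs_of_nonpos (by linarith)]; ring
    have e2 : |u - b| = b - u := by rw [abs_of_nonpos (by linarith)]; ring
    rw [e1, e2, if_neg (by linarith : ¬ v + b < u), if_neg (by linarith : ¬ b - v < u),
      if_neg (by linarith : ¬ u + b < v), if_neg (by linarith : ¬ b - u < v),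
      if_pos (⟨hP1, hP2⟩ : u < b / 2 ∧ v < b / 2), if_pos (by linarith : u < v + b),
      if_pos (by linarith : u < b - v), if_pos (by linarith : v < u + b),
      if_pos (by linarith : v < b - u)]
  · rw [if_neg hP]
    simpa using count_key0 hu hv hb

lemma count_main (x y a : ℝ) (ha : a ≠ 0) :
    ((if |y + a| < |x| then 1 else 0) + (if |y - a| < |x| then 1 else 0)
      + (if |x + a| < |y| then 1 else 0) + (if |x - a| < |y| then 1 else 0)
      + 4 * (if |x| < |a| / 2 ∧ |y| < |a| / 2 then 1 else 0) : ℕ)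
    ≤ (if |x| < |y + a| then 1 else 0) + (if |x| < |y - a| then 1 else 0)
      + (if |y| < |x + a| then 1 else 0) + (if |y| < |x - a| then 1 else 0) := by
  have hk := count_key (abs_nonneg x) (abs_nonneg y) (abs_pos.mpr ha)
  rcases abs_pair y a with ⟨e1, e2⟩ | ⟨e1, e2⟩ <;>
    rcases abs_pair x a with ⟨f1, f2⟩ | ⟨f1, f2⟩ <;>
    rw [e1, e2, f1, f2] <;> linarith

lemma count_ennreal (x y a : ℝ) (ha : a ≠ 0) :
    ((if |y + a| < |x| then 1 else 0) + (if |y - a| < |x| then 1 else 0)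
      + (if |x + a| < |y| then 1 else 0) + (if |x - a| < |y| then 1 else 0)
      + 4 * (if |x| < |a| / 2 ∧ |y| < |a| / 2 then 1 else 0) : ℝ≥0∞)
    ≤ (if |x| < |y + a| then 1 else 0) + (if |x| < |y - a| then 1 else 0)
      + (if |y| < |x + a| then 1 else 0) + (if |y| < |x - a| then 1 else 0) := by
  have h := (Nat.cast_le (α := ℝ≥0∞)).mpr (count_main x y a ha)
  push_cast [apply_ite (fun n : ℕ => (n : ℝ≥0∞))] at h
  convert h using 2 <;> norm_num

/-- If `Z` and `Z'` are independent standard normal random variables and `a ≠ 0`,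
then `P(|Z| < |Z' + a|) > 1/2`. -/
theorem stmt_1 {Ω : Type*} [MeasurableSpace Ω] (μ : Measure Ω) [IsProbabilityMeasure μ]
    (Z Z' : Ω → ℝ) (hZ : Measurable Z) (hZ' : Measurable Z')
    (hZlaw : Measure.map Z μ = gaussianReal 0 1)
    (hZ'law : Measure.map Z' μ = gaussianReal 0 1)
    (hindep : IndepFun Z Z' μ) (a : ℝ) (ha : a ≠ 0) :
    1 / 2 < μ {ω | |Z ω| < |Z' ω + a|} := by
  set ν : Measure ℝ := gaussianReal 0 1 with hν
  set π : Measure (ℝ × ℝ) := ν.prod ν with hπ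
  -- the sets
  set A1 : Set (ℝ × ℝ) := {p | |p.1| < |p.2 + a|} with hA1def
  set A2 : Set (ℝ × ℝ) := {p | |p.1| < |p.2 - a|} with hA2def
  set A3 : Set (ℝ × ℝ) := {p | |p.2| < |p.1 + a|} with hA3def
  set A4 : Set (ℝ × ℝ) := {p | |p.2| < |p.1 - a|} with hA4def
  set B1 : Set (ℝ × ℝ) := {p | |p.2 + a| < |p.1|} with hB1def
  set B2 : Set (ℝ × ℝ) := {p | |p.2 - a| < |p.1|} with hB2def
  set B3 : Set (ℝ × ℝ) := {p | |p.1 + a| < |p.2|} with hB3def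
  set B4 : Set (ℝ × ℝ) := {p | |p.1 - a| < |p.2|} with hB4def
  set P : Set (ℝ × ℝ) := {p | |p.1| < |a| / 2 ∧ |p.2| < |a| / 2} with hPdef
  have mA1 : MeasurableSet A1 := measurableSet_lt measurable_fst.abs (measurable_snd.add_const a).abs
  have mA2 : MeasurableSet A2 := measurableSet_lt measurable_fst.abs (measurable_snd.add_const (-a)).abs
  have mA3 : MeasurableSet A3 := measurableSet_lt measurable_snd.abs (measurable_fst.add_const a).abs
  have mA4 : MeasurableSet A4 := measurableSet_lt measurable_snd.abs (measurable_fst.add_const (-a)).abs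
  have mB1 : MeasurableSet B1 := measurableSet_lt (measurable_snd.add_const a).abs measurable_fst.abs
  have mB2 : MeasurableSet B2 := measurableSet_lt (measurable_snd.add_const (-a)).abs measurable_fst.abs
  have mB3 : MeasurableSet B3 := measurableSet_lt (measurable_fst.add_const a).abs measurable_snd.abs
  have mB4 : MeasurableSet B4 := measurableSet_lt (measurable_fst.add_const (-a)).abs measurable_snd.abs
  have mP : MeasurableSet P :=
    (measurableSet_lt measurable_fst.abs measurable_const).inter
      (measurableSet_lt measurable_snd.abs measurable_const)
  -- measure-preserving transformations
  have hnegmp : MeasurePreserving (fun x : ℝ => -x) ν ν := ⟨measurable_neg, nu_neg⟩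
  have m1 : MeasurePreserving (fun p : ℝ × ℝ => (p.1, -p.2)) π π :=
    (MeasurePreserving.id ν).prod hnegmp
  have m2 : MeasurePreserving (Prod.swap : ℝ × ℝ → ℝ × ℝ) π π := Measure.measurePreserving_swap
  have m3 : MeasurePreserving (fun p : ℝ × ℝ => (p.2, -p.1)) π π := m1.comp m2
  -- symmetry identities
  have eA2 : π A2 = π A1 := by
    rw [← m1.measure_preimage mA1.nullMeasurableSet]
    congr 1
    ext p
    simp only [hA1def, hA2def, Set.mem_setOf_eq, Set.mem_preimage]
    rw [show -p.2 + a = -(p.2 - a) by ring, abs_neg]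
  have eA3 : π A3 = π A1 := by
    rw [← m2.measure_preimage mA1.nullMeasurableSet]
    rfl
  have eA4 : π A4 = π A1 := by
    rw [← m3.measure_preimage mA1.nullMeasurableSet]
    congr 1
    ext p
    simp only [hA1def, hA4def, Set.mem_setOf_eq, Set.mem_preimage]
    rw [show -p.1 + a = -(p.1 - a) by ring, abs_neg]
  have eB2 : π B2 = π B1 := by
    rw [← m1.measure_preimage mB1.nullMeasurableSet]
    congr 1
    ext p
    simp only [hB1def, hB2def, Set.mem_setOf_eq, Set.mem_preimage]
    rw [show -p.2 + a = -(p.2 - a) by ring, abs_neg]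
  have eB3 : π B3 = π B1 := by
    rw [← m2.measure_preimage mB1.nullMeasurableSet]
    rfl
  have eB4 : π B4 = π B1 := by
    rw [← m3.measure_preimage mB1.nullMeasurableSet]
    congr 1
    ext p
    simp only [hB1def, hB4def, Set.mem_setOf_eq, Set.mem_preimage]
    rw [show -p.1 + a = -(p.1 - a) by ring, abs_neg]
  -- integrand measurability
  have hiB1 : Measurable (fun p : ℝ × ℝ => if |p.2 + a| < |p.1| then (1:ℝ≥0∞) else 0) :=
    Measurable.ite mB1 measurable_const measurable_const
  have hiB2 : Measurable (fun p : ℝ × ℝ => if |p.2 - a| < |p.1| then (1:ℝ≥0∞) else 0) :=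
    Measurable.ite mB2 measurable_const measurable_const
  have hiB3 : Measurable (fun p : ℝ × ℝ => if |p.1 + a| < |p.2| then (1:ℝ≥0∞) else 0) :=
    Measurable.ite mB3 measurable_const measurable_const
  have hiB4 : Measurable (fun p : ℝ × ℝ => if |p.1 - a| < |p.2| then (1:ℝ≥0∞) else 0) :=
    Measurable.ite mB4 measurable_const measurable_const
  have hiP : Measurable (fun p : ℝ × ℝ => if |p.1| < |a| / 2 ∧ |p.2| < |a| / 2 then (1:ℝ≥0∞) else 0) :=
    Measurable.ite mP measurable_const measurable_const
  have hiA1 : Measurable (fun p : ℝ × ℝ => if |p.1| < |p.2 + a| then (1:ℝ≥0∞) else 0) :=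
    Measurable.ite mA1 measurable_const measurable_const
  have hiA2 : Measurable (fun p : ℝ × ℝ => if |p.1| < |p.2 - a| then (1:ℝ≥0∞) else 0) :=
    Measurable.ite mA2 measurable_const measurable_const
  have hiA3 : Measurable (fun p : ℝ × ℝ => if |p.2| < |p.1 + a| then (1:ℝ≥0∞) else 0) :=
    Measurable.ite mA3 measurable_const measurable_const
  have hiA4 : Measurable (fun p : ℝ × ℝ => if |p.2| < |p.1 - a| then (1:ℝ≥0∞) else 0) :=
    Measurable.ite mA4 measurable_const measurable_const
  -- lintegral of indicators
  have c1 : ∫⁻ p, (if |p.2 + a| < |p.1| then (1:ℝ≥0∞) else 0) ∂π = π B1 := by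
    rw [← lintegral_indicator_one mB1]
    congr 1
  have c2 : ∫⁻ p, (if |p.2 - a| < |p.1| then (1:ℝ≥0∞) else 0) ∂π = π B2 := by
    rw [← lintegral_indicator_one mB2]
    congr 1
  have c3 : ∫⁻ p, (if |p.1 + a| < |p.2| then (1:ℝ≥0∞) else 0) ∂π = π B3 := by
    rw [← lintegral_indicator_one mB3]
    congr 1
  have c4 : ∫⁻ p, (if |p.1 - a| < |p.2| then (1:ℝ≥0∞) else 0) ∂π = π B4 := by
    rw [← lintegral_indicator_one mB4]
    congr 1
  have cP : ∫⁻ p, (if |p.1| < |a| / 2 ∧ |p.2| < |a| / 2 then (1:ℝ≥0∞) else 0) ∂π = π P := by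
    rw [← lintegral_indicator_one mP]
    congr 1
    ext p
    simp [Set.indicator_apply, hPdef]
  have d1 : ∫⁻ p, (if |p.1| < |p.2 + a| then (1:ℝ≥0∞) else 0) ∂π = π A1 := by
    rw [← lintegral_indicator_one mA1]
    congr 1
  have d2 : ∫⁻ p, (if |p.1| < |p.2 - a| then (1:ℝ≥0∞) else 0) ∂π = π A2 := by
    rw [← lintegral_indicator_one mA2]
    congr 1
  have d3 : ∫⁻ p, (if |p.2| < |p.1 + a| then (1:ℝ≥0∞) else 0) ∂π = π A3 := by
    rw [← lintegral_indicator_one mA3]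
    congr 1
  have d4 : ∫⁻ p, (if |p.2| < |p.1 - a| then (1:ℝ≥0∞) else 0) ∂π = π A4 := by
    rw [← lintegral_indicator_one mA4]
    congr 1
  -- the key inequality
  have hfL : ∫⁻ p, ((if |p.2 + a| < |p.1| then 1 else 0) + (if |p.2 - a| < |p.1| then 1 else 0)
      + (if |p.1 + a| < |p.2| then 1 else 0) + (if |p.1 - a| < |p.2| then 1 else 0)
      + 4 * (if |p.1| < |a| / 2 ∧ |p.2| < |a| / 2 then 1 else 0) : ℝ≥0∞) ∂π
      = π B1 + π B2 + π B3 + π B4 + 4 * π P := by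
    rw [lintegral_add_left (((hiB1.fun_add hiB2).fun_add hiB3).fun_add hiB4),
      lintegral_add_left ((hiB1.fun_add hiB2).fun_add hiB3),
      lintegral_add_left (hiB1.fun_add hiB2), lintegral_add_left hiB1,
      lintegral_const_mul 4 hiP, c1, c2, c3, c4, cP]
  have hfR : ∫⁻ p, ((if |p.1| < |p.2 + a| then 1 else 0) + (if |p.1| < |p.2 - a| then 1 else 0)
      + (if |p.2| < |p.1 + a| then 1 else 0) + (if |p.2| < |p.1 - a| then 1 else 0) : ℝ≥0∞) ∂π
      = π A1 + π A2 + π A3 + π A4 := by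
    rw [lintegral_add_left ((hiA1.fun_add hiA2).fun_add hiA3),
      lintegral_add_left (hiA1.fun_add hiA2), lintegral_add_left hiA1, d1, d2, d3, d4]
  have hkey : π B1 + π B2 + π B3 + π B4 + 4 * π P ≤ π A1 + π A2 + π A3 + π A4 := by
    rw [← hfL, ← hfR]
    exact lintegral_mono fun p => count_ennreal p.1 p.2 a ha
  rw [eA2, eA3, eA4, eB2, eB3, eB4] at hkey
  -- the tie set is null
  have z1 : π {p : ℝ × ℝ | p.1 = p.2 + a} = 0 := by
    rw [hπ, Measure.prod_apply (measurableSet_eq_fun measurable_fst (measurable_snd.add_const a))]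
    have hs : ∀ x : ℝ, (Prod.mk x ⁻¹' {p : ℝ × ℝ | p.1 = p.2 + a}) = {x - a} := by
      intro x
      ext y
      simp [eq_comm, eq_sub_iff_add_eq]
    simp only [hs]
    have hz : ∀ x : ℝ, ν {x - a} = (0:ℝ≥0∞) := fun x => nu_singleton (x - a)
    simp [hz]
  have z2 : π {p : ℝ × ℝ | p.1 = -(p.2 + a)} = 0 := by
    rw [hπ, Measure.prod_apply (measurableSet_eq_fun measurable_fst
      ((measurable_snd.add_const a).fun_neg))]
    have hs : ∀ x : ℝ, (Prod.mk x ⁻¹' {p : ℝ × ℝ | p.1 = -(p.2 + a)}) = {-x - a} := by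
      intro x
      ext y
      constructor
      · intro h
        simp only [Set.mem_preimage, Set.mem_setOf_eq] at h
        simp only [Set.mem_singleton_iff]
        linarith
      · intro h
        simp only [Set.mem_singleton_iff] at h
        simp only [Set.mem_preimage, Set.mem_setOf_eq]
        linarith
    simp only [hs]
    have hz : ∀ x : ℝ, ν {-x - a} = (0:ℝ≥0∞) := fun x => nu_singleton (-x - a)
    simp [hz]
  have hC : π (A1 ∪ B1)ᶜ = 0 := by
    have hsub : (A1 ∪ B1)ᶜ ⊆ {p : ℝ × ℝ | p.1 = p.2 + a} ∪ {p : ℝ × ℝ | p.1 = -(p.2 + a)} := by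
      intro p hp
      simp only [Set.mem_compl_iff, Set.mem_union, hA1def, hB1def, Set.mem_setOf_eq,
        not_or, not_lt] at hp
      have he : |p.1| = |p.2 + a| := le_antisymm hp.2 hp.1
      rcases abs_eq_abs.mp he with h | h
      · exact Or.inl h
      · exact Or.inr h
    apply measure_mono_null hsub
    exact measure_union_null z1 z2
  have hAB : π A1 + π B1 = 1 := by
    have hdisj : Disjoint A1 B1 := by
      rw [Set.disjoint_left]
      intro p h1 h2
      simp only [hA1def, hB1def, Set.mem_setOf_eq] at h1 h2
      exact absurd h2 (lt_asymm h1)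
    rw [← measure_union hdisj mB1]
    have h := measure_add_measure_compl (μ := π) (mA1.union mB1)
    rw [hC, add_zero, measure_univ] at h
    exact h
  -- positivity of P
  have hP0 : π P ≠ 0 := by
    have hPeq : P = {x : ℝ | |x| < |a| / 2} ×ˢ {x : ℝ | |x| < |a| / 2} := by
      ext p
      simp [hPdef, Set.mem_prod]
    have hS : ν {x : ℝ | |x| < |a| / 2} ≠ 0 := by
      intro h0
      have hvol : volume {x : ℝ | |x| < |a| / 2} = 0 :=
        gaussianReal_absolutelyContinuous' 0 one_ne_zero h0
      have hIoo : {x : ℝ | |x| < |a| / 2} = Set.Ioo (-(|a| / 2)) (|a| / 2) := by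
        ext x
        simp [abs_lt, Set.mem_Ioo]
      rw [hIoo, Real.volume_Ioo] at hvol
      rw [ENNReal.ofReal_eq_zero] at hvol
      have := abs_pos.mpr ha
      linarith
    rw [hπ, hPeq, Measure.prod_prod]
    exact mul_ne_zero hS hS
  -- transfer the goal to π
  have hpair : μ.map (fun ω => (Z ω, Z' ω)) = π := by
    have h := (indepFun_iff_map_prod_eq_prod_map_map hZ.aemeasurable hZ'.aemeasurable).mp hindep
    rw [hZlaw, hZ'law] at h
    exact h
  have hμA : μ {ω | |Z ω| < |Z' ω + a|} = π A1 := by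
    rw [← hpair, Measure.map_apply (hZ.prodMk hZ') mA1]
    rfl
  rw [hμA]
  -- final arithmetic in ℝ≥0∞
  by_contra hcon
  push_neg at hcon
  have hB : 1 / 2 ≤ π B1 := by
    have h2 : (1:ℝ≥0∞) ≤ 1 / 2 + π B1 := by
      have h2' : π A1 + π B1 ≤ 1 / 2 + π B1 := add_le_add_left hcon _
      rwa [hAB] at h2'

    have h3 : (1:ℝ≥0∞) - 1 / 2 ≤ π B1 := tsub_le_iff_left.mpr h2
    calc (1:ℝ≥0∞) / 2 = 1 - 1 / 2 := by
          rw [ENNReal.sub_half ENNReal.one_ne_top]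
      _ ≤ π B1 := h3
  have hABle : π A1 ≤ π B1 := le_trans hcon hB
  have hfin : π B1 + π B1 + π B1 + π B1 ≠ ⊤ := by
    finiteness
  have hkey2 : π B1 + π B1 + π B1 + π B1 + 4 * π P ≤ π B1 + π B1 + π B1 + π B1 + 0 := by
    rw [add_zero]
    exact le_trans hkey (by gcongr)
  have h4P : 4 * π P ≤ 0 := (ENNReal.add_le_add_iff_left hfin).mp hkey2
  have : π P = 0 := by
    have h40 : 4 * π P = 0 := le_antisymm h4P zero_le
    simpa using h40
  exact hP0 this
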